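/- arXiv:2205.14661 — 6 statements merged into one kernel-verified Lean document; each statement's English description precedes it below -/
import Mathlib

section
/- Consider local computing of a device with energy budget E > 0 over a frame of duration T > 0, computational energy efficiency γ_c > 0, task intensity C > 0 (CPU cycles per bit), and maximum CPU frequency f_max > 0. For every computing time t ∈ [0, T] and CPU frequency f ∈ [0, f_max] satisfying the energy constraint γ_c·f³·t ≤ E, the number of locally computed bits satisfies t·f/C ≤ T·min((E/(T·γ_c))^{1/3}, f_max)/C. Moreover, the choice t* = T and f* = min((E/(T·γ_c))^{1/3}, f_max) is feasible, i.e., γ_c·(f*)³·T ≤ E and f* ∈ [0, f_max], and it attains this maximum value. -/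
/-- Lemma 1: optimal local computing time and frequency.
With energy budget `E > 0`, frame duration `T > 0`, computational energy
efficiency `γc > 0`, task intensity `C > 0` and maximum CPU frequency
`fmax > 0`: every feasible `(t, f)` yields at most `T * min ((E/(T*γc))^(1/3)) fmax / C`
locally computed bits, the choice `t* = T`, `f* = min ((E/(T*γc))^(1/3)) fmax`
is feasible, and it attains this maximum value. -/
theorem stmt0 (E T γc C fmax : ℝ) (hE : 0 < E) (hT : 0 < T) (hγ : 0 < γc)
    (hC : 0 < C) (hf : 0 < fmax) :
    (∀ t f : ℝ, 0 ≤ t → t ≤ T → 0 ≤ f → f ≤ fmax → γc * f ^ 3 * t ≤ E →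
      t * f / C ≤ T * min ((E / (T * γc)) ^ ((1 : ℝ) / 3)) fmax / C) ∧
    (γc * (min ((E / (T * γc)) ^ ((1 : ℝ) / 3)) fmax) ^ 3 * T ≤ E ∧
      0 ≤ min ((E / (T * γc)) ^ ((1 : ℝ) / 3)) fmax ∧
      min ((E / (T * γc)) ^ ((1 : ℝ) / 3)) fmax ≤ fmax) ∧
    T * (min ((E / (T * γc)) ^ ((1 : ℝ) / 3)) fmax) / C =
      T * min ((E / (T * γc)) ^ ((1 : ℝ) / 3)) fmax / C := by
  set A := (E / (T * γc)) ^ ((1 : ℝ) / 3) with hA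
  have hbase : 0 < E / (T * γc) := by positivity
  have hApos : 0 < A := Real.rpow_pos_of_pos hbase _
  have hA3 : A ^ 3 = E / (T * γc) := by
    rw [hA, ← Real.rpow_natCast (_ ^ _) 3, ← Real.rpow_mul hbase.le]
    norm_num
  have hm : 0 ≤ min A fmax := le_min hApos.le hf.le
  have hE' : T * γc * A ^ 3 = E := by rw [hA3]; field_simp
  refine ⟨?_, ⟨?_, hm, min_le_right _ _⟩, rfl⟩
  · intro t f ht htT hf0 hffmax hEcon
    have key : t * f ≤ T * min A fmax := by
      rcases le_or_gt f (min A fmax) with h | h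
      · calc t * f ≤ T * f := mul_le_mul_of_nonneg_right htT hf0
          _ ≤ T * min A fmax := mul_le_mul_of_nonneg_left h hT.le
      · have hmin : min A fmax = A := min_eq_left (by
          by_contra hc
          push_neg at hc
          have : min A fmax = fmax := min_eq_right hc.le
          exact absurd hffmax (by rw [this] at h; linarith))
        rw [hmin] at h ⊢
        have hfpos : 0 < f := lt_trans hApos h
        have ht' : t ≤ E / (γc * f ^ 3) := by
          rw [le_div_iff₀ (by positivity)]
          nlinarith
        calc t * f ≤ (E / (γc * f ^ 3)) * f :=
              mul_le_mul_of_nonneg_right ht' hf0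
          _ = E / (γc * f ^ 2) := by field_simp
          _ ≤ E / (γc * A ^ 2) := by
              apply div_le_div_of_nonneg_left hE.le (by positivity)
              have : A ^ 2 ≤ f ^ 2 := pow_le_pow_left₀ hApos.le h.le 2
              nlinarith
          _ = T * A := by
              rw [eq_comm, eq_div_iff (by positivity)]
              linear_combination hE'
    exact div_le_div_of_nonneg_right key hC.le |>.trans_eq rfl
  · calc γc * (min A fmax) ^ 3 * T ≤ γc * A ^ 3 * T := by
          have : (min A fmax) ^ 3 ≤ A ^ 3 :=
            pow_le_pow_left₀ hm (min_le_left _ _) 3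
          nlinarith
      _ = E := by linear_combination hE'
end

section
/- Let K be a finite index set, let T > 0, and for each k ∈ K let c_k ≥ 0 and τ_k > 0 with Σ_{k∈K} τ_k ≤ T. Then Σ_{k∈K} τ_k·log₂(1 + c_k/τ_k) ≤ T·log₂(1 + (Σ_{k∈K} c_k)/T). -/
/-- Tangent-line inequality: `log p ≤ log M + (p - M)/M`. -/
lemma tangent_log (p M : ℝ) (hp : 0 < p) (hM : 0 < M) :
    Real.log p ≤ Real.log M + (p - M) / M := by
  have h := Real.log_le_sub_one_of_pos (show 0 < p / M by positivity)
  rw [Real.log_div (ne_of_gt hp) (ne_of_gt hM)] at h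
  have h2 : p / M - 1 = (p - M) / M := by field_simp
  linarith [h2 ▸ h]

lemma mul_log_ge (M : ℝ) (hM : 0 < M) : M - 1 ≤ M * Real.log M := by
  have h := Real.log_le_sub_one_of_pos (show 0 < 1 / M by positivity)
  rw [Real.log_div one_ne_zero (ne_of_gt hM), Real.log_one] at h
  have h1 : M * (1 / M) = 1 := by field_simp
  nlinarith [mul_le_mul_of_nonneg_left h hM.le]

/-- Jensen-type inequality for `log` with weights summing to at most 1 and
points at least 1. -/
lemma jensen_log {ι : Type*} (K : Finset ι) (w p : ι → ℝ)
    (hw : ∀ k ∈ K, 0 ≤ w k) (hp : ∀ k ∈ K, 1 ≤ p k)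
    (hs : ∑ k ∈ K, w k ≤ 1) :
    ∑ k ∈ K, w k * Real.log (p k) ≤
      Real.log (1 - (∑ k ∈ K, w k) + ∑ k ∈ K, w k * p k) := by
  set S := ∑ k ∈ K, w k with hSdef
  set C := ∑ k ∈ K, w k * p k with hCdef
  have hS0 : 0 ≤ S := Finset.sum_nonneg hw
  have hCS : S ≤ C := by
    apply Finset.sum_le_sum
    intro k hk
    nlinarith [hw k hk, hp k hk]
  set M := 1 - S + C with hMdef
  have hM1 : (1:ℝ) ≤ M := by simp only [hMdef]; linarith
  have hM0 : (0:ℝ) < M := by linarith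
  have step : M * ∑ k ∈ K, w k * Real.log (p k) ≤ M * (S * Real.log M) + (C - S * M) := by
    have h1 : ∑ k ∈ K, M * (w k * Real.log (p k)) ≤
        ∑ k ∈ K, (M * (w k * Real.log M) + (w k * p k - w k * M)) := by
      apply Finset.sum_le_sum
      intro k hk
      have hpk : 0 < p k := lt_of_lt_of_le one_pos (hp k hk)
      have ht := tangent_log (p k) M hpk hM0
      have hwk := hw k hk
      have h3 : M * ((p k - M) / M) = p k - M := by field_simp
      have h4 : M * (w k * Real.log (p k)) ≤ M * (w k * (Real.log M + (p k - M) / M)) :=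
        mul_le_mul_of_nonneg_left (mul_le_mul_of_nonneg_left ht hwk) hM0.le
      have h5 : M * (w k * (Real.log M + (p k - M) / M))
          = M * (w k * Real.log M) + (w k * p k - w k * M) := by
        linear_combination (w k) * h3
      exact h4.trans_eq h5
    rw [Finset.sum_add_distrib, Finset.sum_sub_distrib] at h1
    have e1 : ∑ x ∈ K, M * (w x * Real.log M) = M * (S * Real.log M) := by
      rw [Finset.sum_congr rfl fun x _ =>
        (by ring : M * (w x * Real.log M) = w x * (M * Real.log M)), ← Finset.sum_mul]
      ring
    have e2 : ∑ x ∈ K, w x * M = S * M := by rw [← Finset.sum_mul]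
    calc M * ∑ k ∈ K, w k * Real.log (p k)
        = ∑ k ∈ K, M * (w k * Real.log (p k)) := by rw [Finset.mul_sum]
      _ ≤ _ := h1
      _ = M * (S * Real.log M) + (C - S * M) := by rw [e1, e2]
  have key : C - S * M = (M - 1) * (1 - S) := by simp only [hMdef]; ring
  have hmlog : M - 1 ≤ M * Real.log M := mul_log_ge M hM0
  have final : M * ∑ k ∈ K, w k * Real.log (p k) ≤ M * Real.log M := by
    rw [key] at step
    nlinarith [hmlog, hS0, hs]
  exact le_of_mul_le_mul_left final hM0

/-- Optimal value bound for the offloading time-allocation problem: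
`Σ_k τ_k·log₂(1 + c_k/τ_k) ≤ T·log₂(1 + (Σ_k c_k)/T)` whenever `τ_k > 0`
and `Σ_k τ_k ≤ T`. -/
theorem stmt4 {ι : Type*} (K : Finset ι) (T : ℝ) (hT : 0 < T) (c τ : ι → ℝ)
    (hc : ∀ k ∈ K, 0 ≤ c k) (hτ : ∀ k ∈ K, 0 < τ k)
    (hsum : ∑ k ∈ K, τ k ≤ T) :
    ∑ k ∈ K, τ k * Real.logb 2 (1 + c k / τ k) ≤
      T * Real.logb 2 (1 + (∑ k ∈ K, c k) / T) := by
  have hlog2 : (0:ℝ) < Real.log 2 := Real.log_pos (by norm_num)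
  have hw : ∀ k ∈ K, 0 ≤ τ k / T := fun k hk => div_nonneg (hτ k hk).le hT.le
  have hp1 : ∀ k ∈ K, (1:ℝ) ≤ 1 + c k / τ k := fun k hk => by
    have := div_nonneg (hc k hk) (hτ k hk).le
    linarith
  have hws : ∑ k ∈ K, τ k / T ≤ 1 := by
    rw [← Finset.sum_div]
    exact (div_le_one hT).mpr hsum
  have hj := jensen_log K (fun k => τ k / T) (fun k => 1 + c k / τ k) hw hp1 hws
  have hsum2 : ∑ k ∈ K, (τ k / T) * (1 + c k / τ k)
      = (∑ k ∈ K, τ k) / T + (∑ k ∈ K, c k) / T := by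
    rw [Finset.sum_congr rfl (fun k hk => ?_), ← Finset.sum_div,
      Finset.sum_add_distrib, add_div]
    have hτk : τ k ≠ 0 := (hτ k hk).ne'
    field_simp
  have harg : 1 - (∑ k ∈ K, τ k / T) + ∑ k ∈ K, (τ k / T) * (1 + c k / τ k)
      = 1 + (∑ k ∈ K, c k) / T := by
    rw [hsum2, ← Finset.sum_div]; ring
  rw [harg] at hj
  have hL : ∑ k ∈ K, τ k * Real.log (1 + c k / τ k)
      ≤ T * Real.log (1 + (∑ k ∈ K, c k) / T) := by
    have h := mul_le_mul_of_nonneg_left hj hT.le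
    calc ∑ k ∈ K, τ k * Real.log (1 + c k / τ k)
        = T * ∑ k ∈ K, (τ k / T) * Real.log (1 + c k / τ k) := by
          rw [Finset.mul_sum]
          refine Finset.sum_congr rfl fun k hk => ?_
          field_simp
      _ ≤ T * Real.log (1 + (∑ k ∈ K, c k) / T) := h
  simp only [Real.logb]
  calc ∑ k ∈ K, τ k * (Real.log (1 + c k / τ k) / Real.log 2)
      = (∑ k ∈ K, τ k * Real.log (1 + c k / τ k)) / Real.log 2 := by
        rw [Finset.sum_div]
        exact Finset.sum_congr rfl fun k _ => by ring
    _ ≤ (T * Real.log (1 + (∑ k ∈ K, c k) / T)) / Real.log 2 := by gcongr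
    _ = T * (Real.log (1 + (∑ k ∈ K, c k) / T) / Real.log 2) := by ring
end

section
/- Let K be a nonempty finite index set, let T > 0, and for each k ∈ K let c_k > 0. Setting τ_k = T·c_k/(Σ_{j∈K} c_j) for each k, we have τ_k > 0, Σ_{k∈K} τ_k = T, and Σ_{k∈K} τ_k·log₂(1 + c_k/τ_k) = T·log₂(1 + (Σ_{k∈K} c_k)/T). -/
/-- Attainment of the closed-form optimal value: the proportional (equal-SNR)
time allocation `τ_k = T·c_k/(Σ_j c_j)` is feasible and achieves
`T·log₂(1 + (Σ_k c_k)/T)`. -/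
theorem stmt5 {ι : Type*} (K : Finset ι) (hK : K.Nonempty) (T : ℝ) (hT : 0 < T)
    (c : ι → ℝ) (hc : ∀ k ∈ K, 0 < c k) :
    (∀ k ∈ K, 0 < T * c k / (∑ j ∈ K, c j)) ∧
    (∑ k ∈ K, T * c k / (∑ j ∈ K, c j)) = T ∧
    (∑ k ∈ K, (T * c k / (∑ j ∈ K, c j)) *
        Real.logb 2 (1 + c k / (T * c k / (∑ j ∈ K, c j)))) =
      T * Real.logb 2 (1 + (∑ k ∈ K, c k) / T) := by
  have hS : 0 < ∑ j ∈ K, c j := Finset.sum_pos hc hK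
  have hsum : (∑ k ∈ K, T * c k / (∑ j ∈ K, c j)) = T := by
    rw [← Finset.sum_div, ← Finset.mul_sum, mul_div_assoc, div_self hS.ne', mul_one]
  refine ⟨fun k hk => div_pos (mul_pos hT (hc k hk)) hS, hsum, ?_⟩
  have : ∀ k ∈ K, (T * c k / (∑ j ∈ K, c j)) *
      Real.logb 2 (1 + c k / (T * c k / (∑ j ∈ K, c j))) =
      (T * c k / (∑ j ∈ K, c j)) * Real.logb 2 (1 + (∑ j ∈ K, c j) / T) := by
    intro k hk
    have hck := hc k hk
    congr 2
    field_simp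
  rw [Finset.sum_congr rfl this, ← Finset.sum_mul, hsum]
end

section
/- Let Q be a nonempty finite index set, and let g_q ≥ 0 for q ∈ Q, σ² > 0, E ≥ 0, and τ > 0. For any τ_q > 0 with Σ_{q∈Q} τ_q = τ and any p_q ≥ 0 with Σ_{q∈Q} τ_q·p_q ≤ E, it holds that Σ_{q∈Q} τ_q·log₂(1 + p_q·g_q/σ²) ≤ τ·log₂(1 + E·(max_{q∈Q} g_q)/(τ·σ²)). -/
/-- Core of Lemma 2: a device splitting its time slot `τ` among the `Q` IRS
beamforming vectors, with sub-slot durations `τq` and powers `p` subject to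
the energy budget `E`, offloads at most `τ·log₂(1 + E·(max_q g_q)/(τ·σ²))`
bits. -/
theorem stmt6 {ι : Type*} (Q : Finset ι) (hQ : Q.Nonempty) (g : ι → ℝ)
    (hg : ∀ q ∈ Q, 0 ≤ g q) (σ2 E τ : ℝ) (hσ : 0 < σ2) (hE : 0 ≤ E)
    (hτ : 0 < τ) (τq p : ι → ℝ) (hτq : ∀ q ∈ Q, 0 < τq q)
    (hτsum : ∑ q ∈ Q, τq q = τ) (hp : ∀ q ∈ Q, 0 ≤ p q)
    (hpE : ∑ q ∈ Q, τq q * p q ≤ E) :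
    ∑ q ∈ Q, τq q * Real.logb 2 (1 + p q * g q / σ2) ≤
      τ * Real.logb 2 (1 + E * (Q.sup' hQ g) / (τ * σ2)) := by
  set G := Q.sup' hQ g with hG
  have hG0 : 0 ≤ G := by
    obtain ⟨q, hq⟩ := hQ
    exact le_trans (hg q hq) (Finset.le_sup' g hq)
  have hlog2 : (0:ℝ) < Real.log 2 := Real.log_pos (by norm_num)
  -- Step 1: replace g q by G
  have step1 : ∀ q ∈ Q, τq q * Real.logb 2 (1 + p q * g q / σ2) ≤
      τq q * Real.logb 2 (1 + p q * G / σ2) := by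
    intro q hq
    apply mul_le_mul_of_nonneg_left _ (hτq q hq).le
    have h0 : 0 ≤ p q * g q / σ2 := div_nonneg (mul_nonneg (hp q hq) (hg q hq)) hσ.le
    apply Real.logb_le_logb_of_le (b := 2) (by norm_num) (by linarith)
    gcongr
    · exact hp q hq
    · exact Finset.le_sup' g hq
  refine le_trans (Finset.sum_le_sum step1) ?_
  -- Jensen with weights τq/τ
  have hconc : ConcaveOn ℝ (Set.Ioi 0) Real.log := strictConcaveOn_log_Ioi.concaveOn
  set x : ι → ℝ := fun q => 1 + p q * G / σ2 with hx
  have hxpos : ∀ q ∈ Q, x q ∈ Set.Ioi (0:ℝ) := by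
    intro q hq
    have : 0 ≤ p q * G / σ2 := div_nonneg (mul_nonneg (hp q hq) hG0) hσ.le
    simp only [Set.mem_Ioi, hx]; linarith
  have hw : ∑ q ∈ Q, τq q / τ = 1 := by
    rw [← Finset.sum_div, hτsum, div_self hτ.ne']
  have hjensen := hconc.le_map_sum (t := Q) (w := fun q => τq q / τ) (p := x)
    (fun q hq => div_nonneg (hτq q hq).le hτ.le) hw hxpos
  simp only [smul_eq_mul] at hjensen
  have hsumx : ∑ q ∈ Q, τq q / τ * x q ≤ 1 + E * G / (τ * σ2) := by
    have heq : ∑ q ∈ Q, τq q / τ * x q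
        = (∑ q ∈ Q, τq q / τ) + (∑ q ∈ Q, τq q * p q) * (G / (τ * σ2)) := by
      rw [Finset.sum_mul, ← Finset.sum_add_distrib]
      apply Finset.sum_congr rfl
      intro q hq
      simp only [hx]
      field_simp
    rw [heq, hw]
    have hGτσ : 0 ≤ G / (τ * σ2) := div_nonneg hG0 (mul_pos hτ hσ).le
    have : (∑ q ∈ Q, τq q * p q) * (G / (τ * σ2)) ≤ E * (G / (τ * σ2)) :=
      mul_le_mul_of_nonneg_right hpE hGτσ
    have hE2 : E * (G / (τ * σ2)) = E * G / (τ * σ2) := by ring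
    linarith
  have hmono : Real.log (∑ q ∈ Q, τq q / τ * x q) ≤ Real.log (1 + E * G / (τ * σ2)) := by
    apply Real.log_le_log _ hsumx
    obtain ⟨q0, hq0⟩ := hQ
    calc (0:ℝ) < τq q0 / τ * x q0 := by
          apply mul_pos (div_pos (hτq q0 hq0) hτ) (hxpos q0 hq0)
      _ ≤ ∑ q ∈ Q, τq q / τ * x q := by
          apply Finset.single_le_sum (f := fun q => τq q / τ * x q) _ hq0
          intro q hq
          exact mul_nonneg (div_nonneg (hτq q hq).le hτ.le) (hxpos q hq).le
  -- assemble
  have key : ∑ q ∈ Q, τq q / τ * Real.log (x q) ≤ Real.log (1 + E * G / (τ * σ2)) :=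
    le_trans hjensen hmono
  have : ∑ q ∈ Q, τq q * Real.logb 2 (x q) ≤ τ * Real.logb 2 (1 + E * G / (τ * σ2)) := by
    have := mul_le_mul_of_nonneg_left key hτ.le
    rw [Finset.mul_sum] at this
    simp only [Real.logb, div_eq_mul_inv]
    calc ∑ q ∈ Q, τq q * (Real.log (x q) * (Real.log 2)⁻¹)
        = (∑ q ∈ Q, τ * (τq q * τ⁻¹ * Real.log (x q))) * (Real.log 2)⁻¹ := by
          rw [Finset.sum_mul]
          apply Finset.sum_congr rfl
          intro q hq
          field_simp
      _ ≤ (τ * Real.log (1 + E * G / (τ * σ2))) * (Real.log 2)⁻¹ := by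
          have h2 : (0:ℝ) ≤ (Real.log 2)⁻¹ := inv_nonneg.mpr hlog2.le
          apply mul_le_mul_of_nonneg_right _ h2
          calc ∑ q ∈ Q, τ * (τq q * τ⁻¹ * Real.log (x q))
              = ∑ q ∈ Q, τ * (τq q / τ * Real.log (x q)) := by
                apply Finset.sum_congr rfl; intro q hq; rw [div_eq_mul_inv]
            _ ≤ τ * Real.log (1 + E * G / (τ * σ2)) := this
      _ = τ * (Real.log (1 + E * G / (τ * σ2)) * (Real.log 2)⁻¹) := by ring
  simpa using this
end

section
/- Let K and Q be nonempty finite index sets, and for k ∈ K, q ∈ Q let g_{k,q} ≥ 0 with g_k* := max_{q∈Q} g_{k,q} > 0, let E_k > 0, T > 0 and σ² > 0. (a) For any τ_{k,q} > 0 with Σ_{k∈K} Σ_{q∈Q} τ_{k,q} ≤ T and any p_{k,q} ≥ 0 with Σ_{q∈Q} τ_{k,q}·p_{k,q} ≤ E_k for every k, it holds that Σ_{k∈K} Σ_{q∈Q} τ_{k,q}·log₂(1 + p_{k,q}·g_{k,q}/σ²) ≤ T·log₂(1 + Σ_{k∈K} E_k·g_k*/(T·σ²)). (b) This bound is attained: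 choosing for each k an index q_k achieving g_{k,q_k} = g_k*, setting τ_{k,q_k} = T·E_k·g_k*/(Σ_{j∈K} E_j·g_j*) with all other τ_{k,q} equal to zero (their terms contributing zero), and p_{k,q_k} = E_k/τ_{k,q_k}, achieves equality. -/
lemma concave_logb2_aux : ConcaveOn ℝ (Set.Ici (0:ℝ)) (fun x => Real.logb 2 (1 + x)) := by
  constructor
  · exact convex_Ici 0
  · intro x hx y hy a b ha hb hab
    have hx0 : (0:ℝ) < 1 + x := by have := hx; simp at this; linarith
    have hy0 : (0:ℝ) < 1 + y := by have := hy; simp at this; linarith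
    have key := (strictConcaveOn_log_Ioi.concaveOn).2
      (Set.mem_Ioi.mpr hx0) (Set.mem_Ioi.mpr hy0) ha hb hab
    have h1 : a * (1+x) + b * (1+y) = 1 + (a*x + b*y) := by
      have : a + b = 1 := hab; nlinarith [this]
    have key' : a * Real.log (1+x) + b * Real.log (1+y) ≤ Real.log (1 + (a*x + b*y)) := by
      simpa [smul_eq_mul, h1] using key
    have hl2 : (0:ℝ) < Real.log 2 := Real.log_pos one_lt_two
    simp only [smul_eq_mul, Real.logb]
    calc a * (Real.log (1+x) / Real.log 2) + b * (Real.log (1+y) / Real.log 2)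
        = (a * Real.log (1+x) + b * Real.log (1+y)) / Real.log 2 := by ring
      _ ≤ Real.log (1 + (a*x + b*y)) / Real.log 2 := by gcongr

/-- Lemma 2 combined with the closed-form value (A.5): (a) the sum offloading
rate of all devices is at most `T·log₂(1 + Σ_k E_k·g_k*/(T·σ²))`, where
`g_k* = max_q g_{k,q}`; (b) this bound is attained by letting each device `k`
use only a best IRS beamforming vector `q_k`, with time share proportional to
`E_k·g_k*` and power depleting its whole energy budget. -/
theorem stmt7 {K Q : Type*} [Fintype K] [Fintype Q] [Nonempty K] [Nonempty Q]
    [DecidableEq Q]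
    (g : K → Q → ℝ) (hg : ∀ k q, 0 ≤ g k q) (gstar : K → ℝ)
    (hgdef : ∀ k, gstar k = Finset.univ.sup' Finset.univ_nonempty (g k))
    (hgpos : ∀ k, 0 < gstar k) (E : K → ℝ) (hE : ∀ k, 0 < E k)
    (T σ2 : ℝ) (hT : 0 < T) (hσ : 0 < σ2) :
    (∀ τ p : K → Q → ℝ, (∀ k q, 0 < τ k q) →
      (∑ k, ∑ q, τ k q) ≤ T → (∀ k q, 0 ≤ p k q) →
      (∀ k, ∑ q, τ k q * p k q ≤ E k) →
      ∑ k, ∑ q, τ k q * Real.logb 2 (1 + p k q * g k q / σ2) ≤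
        T * Real.logb 2 (1 + (∑ k, E k * gstar k) / (T * σ2))) ∧
    (∃ (qk : K → Q) (τ p : K → Q → ℝ),
      (∀ k, g k (qk k) = gstar k) ∧
      (∀ k q, q ≠ qk k → τ k q = 0) ∧
      (∀ k, τ k (qk k) = T * (E k * gstar k) / (∑ j, E j * gstar j)) ∧
      (∀ k, p k (qk k) = E k / τ k (qk k)) ∧
      (∀ k q, 0 ≤ p k q) ∧
      ∑ k, ∑ q, τ k q * Real.logb 2 (1 + p k q * g k q / σ2) =
        T * Real.logb 2 (1 + (∑ k, E k * gstar k) / (T * σ2))) := by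
  have hSpos : 0 < ∑ j, E j * gstar j :=
    Finset.sum_pos (fun k _ => mul_pos (hE k) (hgpos k)) Finset.univ_nonempty
  set S : ℝ := ∑ j, E j * gstar j with hSdef
  have hglestar : ∀ k q, g k q ≤ gstar k := by
    intro k q
    rw [hgdef k]
    exact Finset.le_sup' (g k) (Finset.mem_univ q)
  constructor
  · -- part (a)
    intro τ p hτ hτT hp hEc
    set f : ℝ → ℝ := fun x => Real.logb 2 (1 + x) with hfdef
    set W : ℝ := ∑ k, ∑ q, τ k q with hWdef
    have hWpos : 0 < W :=
      Finset.sum_pos (fun k _ => Finset.sum_pos (fun q _ => hτ k q) Finset.univ_nonempty)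
        Finset.univ_nonempty
    set w : Option (K × Q) → ℝ := fun i => i.elim (1 - W / T) (fun kq => τ kq.1 kq.2 / T)
      with hwdef
    set x : Option (K × Q) → ℝ := fun i => i.elim 0 (fun kq => p kq.1 kq.2 * g kq.1 kq.2 / σ2)
      with hxdef
    have hw0 : ∀ i ∈ Finset.univ, 0 ≤ w i := by
      rintro (_ | kq) _
      · simp only [hwdef, Option.elim]
        have : W / T ≤ 1 := (div_le_one hT).mpr hτT
        linarith
      · exact div_nonneg (hτ kq.1 kq.2).le hT.le
    have hwsum : ∑ i, w i = 1 := by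
      rw [Fintype.sum_option]
      simp only [hwdef, Option.elim]
      rw [Fintype.sum_prod_type]
      have : ∑ k, ∑ q, τ k q / T = W / T := by
        rw [hWdef, Finset.sum_div]
        exact Finset.sum_congr rfl (fun k _ => (Finset.sum_div _ _ _).symm)
      rw [this]; ring
    have hmem : ∀ i ∈ Finset.univ, x i ∈ Set.Ici (0:ℝ) := by
      rintro (_ | kq) _
      · simp [hxdef]
      · exact Set.mem_Ici.mpr (div_nonneg (mul_nonneg (hp _ _) (hg _ _)) hσ.le)
    have hjen := concave_logb2_aux.le_map_sum hw0 hwsum hmem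
    set s0 : ℝ := (∑ k, ∑ q, τ k q * p k q * g k q) / (T * σ2) with hs0def
    have hs0nn : 0 ≤ s0 := by
      apply div_nonneg _ (mul_pos hT hσ).le
      exact Finset.sum_nonneg fun k _ => Finset.sum_nonneg fun q _ =>
        mul_nonneg (mul_nonneg (hτ k q).le (hp k q)) (hg k q)
    have h1 : ∑ i, w i • (fun y => Real.logb 2 (1 + y)) (x i)
        = ∑ k, ∑ q, (τ k q / T) * Real.logb 2 (1 + p k q * g k q / σ2) := by
      rw [Fintype.sum_option]
      simp only [hwdef, hxdef, Option.elim, smul_eq_mul, add_zero, Real.logb_one, mul_zero,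
        zero_add]
      rw [Fintype.sum_prod_type]
    have h2 : ∑ i, w i • x i = s0 := by
      rw [Fintype.sum_option]
      simp only [hwdef, hxdef, Option.elim, smul_eq_mul, mul_zero, zero_add]
      rw [Fintype.sum_prod_type, hs0def, Finset.sum_div]
      refine Finset.sum_congr rfl fun k _ => ?_
      rw [Finset.sum_div]
      refine Finset.sum_congr rfl fun q _ => ?_
      field_simp
    rw [h1, h2] at hjen
    have hnum : ∑ k, ∑ q, τ k q * p k q * g k q ≤ S := by
      refine Finset.sum_le_sum fun k _ => ?_
      calc ∑ q, τ k q * p k q * g k q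
          ≤ ∑ q, τ k q * p k q * gstar k :=
            Finset.sum_le_sum fun q _ =>
              mul_le_mul_of_nonneg_left (hglestar k q)
                (mul_nonneg (hτ k q).le (hp k q))
        _ = (∑ q, τ k q * p k q) * gstar k := (Finset.sum_mul _ _ _).symm
        _ ≤ E k * gstar k := mul_le_mul_of_nonneg_right (hEc k) (hgpos k).le
    have hs0le : s0 ≤ S / (T * σ2) := by
      rw [hs0def]; gcongr
    have hmono : Real.logb 2 (1 + s0) ≤ Real.logb 2 (1 + S / (T * σ2)) :=
      Real.logb_le_logb_of_le one_lt_two (by linarith) (by linarith)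
    have hfinal : ∑ k, ∑ q, (τ k q / T) * Real.logb 2 (1 + p k q * g k q / σ2)
        ≤ Real.logb 2 (1 + S / (T * σ2)) := hjen.trans hmono
    have hmul : ∑ k, ∑ q, τ k q * Real.logb 2 (1 + p k q * g k q / σ2)
        = T * ∑ k, ∑ q, (τ k q / T) * Real.logb 2 (1 + p k q * g k q / σ2) := by
      rw [Finset.mul_sum]
      refine Finset.sum_congr rfl fun k _ => ?_
      rw [Finset.mul_sum]
      refine Finset.sum_congr rfl fun q _ => ?_
      field_simp
    rw [hmul]
    exact mul_le_mul_of_nonneg_left hfinal hT.le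
  · -- part (b)
    have hqk : ∀ k : K, ∃ q : Q, g k q = gstar k := by
      intro k
      obtain ⟨q, -, hq⟩ := Finset.exists_mem_eq_sup' (Finset.univ_nonempty) (g k)
      exact ⟨q, by rw [hgdef k, hq]⟩
    choose qk hqk using hqk
    refine ⟨qk, fun k q => if q = qk k then T * (E k * gstar k) / S else 0,
      fun k q => if q = qk k then S / (T * gstar k) else 0, hqk, ?_, ?_, ?_, ?_, ?_⟩
    · intro k q hq; simp [hq]
    · intro k; simp
    · intro k
      have hg0 : gstar k ≠ 0 := (hgpos k).ne'
      have hE0 : E k ≠ 0 := (hE k).ne'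
      have hT0 : T ≠ 0 := hT.ne'
      have hS0 : S ≠ 0 := hSpos.ne'
      simp only [eq_self_iff_true, if_true]
      rw [eq_div_iff (div_ne_zero (by positivity) hS0)]
      field_simp
    · intro k q
      dsimp only
      split
      · exact div_nonneg hSpos.le (mul_pos hT (hgpos k)).le
      · exact le_refl 0
    · dsimp only
      have hC : ∀ k, (S / (T * gstar k)) * g k (qk k) / σ2 = S / (T * σ2) := by
        intro k
        have hg0 : gstar k ≠ 0 := (hgpos k).ne'
        have hT0 : T ≠ 0 := hT.ne'
        have hσ0 : σ2 ≠ 0 := hσ.ne'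
        rw [hqk k]
        field_simp
      have hterm : ∀ k, ∑ q, (if q = qk k then T * (E k * gstar k) / S else 0) *
          Real.logb 2 (1 + (if q = qk k then S / (T * gstar k) else 0) * g k q / σ2)
          = (T * (E k * gstar k) / S) * Real.logb 2 (1 + S / (T * σ2)) := by
        intro k
        rw [Finset.sum_eq_single_of_mem (qk k) (Finset.mem_univ _)]
        · simp only [eq_self_iff_true, if_true]
          rw [hC k]
        · intro q _ hq
          simp [hq]
      calc ∑ k, ∑ q, (if q = qk k then T * (E k * gstar k) / S else 0) *
            Real.logb 2 (1 + (if q = qk k then S / (T * gstar k) else 0) * g k q / σ2)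
          = ∑ k, (T * (E k * gstar k) / S) * Real.logb 2 (1 + S / (T * σ2)) :=
            Finset.sum_congr rfl fun k _ => hterm k
        _ = (∑ k, T * (E k * gstar k) / S) * Real.logb 2 (1 + S / (T * σ2)) :=
            (Finset.sum_mul _ _ _).symm
        _ = T * Real.logb 2 (1 + S / (T * σ2)) := by
            have : ∑ k, T * (E k * gstar k) / S = T := by
              rw [← Finset.sum_div, ← Finset.mul_sum, ← hSdef, mul_div_assoc,
                div_self hSpos.ne', mul_one]
            rw [this]
end

section
/- Let K ≥ 1, let g : {1, …, K} → ℝ be nonnegative and nonincreasing (g_1 ≥ g_2 ≥ … ≥ g_K ≥ 0), and let E > 0, B > 0, T > 0, σ² > 0, L ≥ 0. Define F(S) := B·T·log₂(1 + E·Σ_{k∈S} g_k/(T·σ²)) + (K − |S|)·L for S ⊆ {1, …, K}. Let m* be the largest m ∈ {0, 1, …, K} such that for every j ∈ {1, …, m}, the activation condition B·T·log₂((T·σ² + E·Σ_{i=1}^{j} g_i)/(T·σ² + E·Σ_{i=1}^{j−1} g_i)) ≥ L holds. Then the prefix set S* = {1, …, m*} satisfies F(S*) ≥ F(S) for every S ⊆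 {1, …, K}. -/
/-- Proposition 1: in the homogeneous case (common energy budget `E` and
common local computing rate `L`), with devices indexed `1, …, K` so that the
channel gains `g` are nonincreasing, the greedy prefix set `{1, …, m*}`
produced by the successive refinement algorithm (where `m*` is the largest
`m ≤ K` such that the activation condition holds for every `j ≤ m`) maximizes
the total computation rate `F` over all subsets of `{1, …, K}`. -/
theorem stmt10 (K : ℕ) (hK : 1 ≤ K) (g : ℕ → ℝ)
    (hg : ∀ k ∈ Finset.Icc 1 K, 0 ≤ g k)
    (hmono : ∀ i j : ℕ, 1 ≤ i → i ≤ j → j ≤ K → g j ≤ g i)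
    (E B T σ2 L : ℝ) (hE : 0 < E) (hB : 0 < B) (hT : 0 < T) (hσ : 0 < σ2)
    (hL : 0 ≤ L) (F : Finset ℕ → ℝ)
    (hF : ∀ S : Finset ℕ, F S =
      B * T * Real.logb 2 (1 + E * (∑ k ∈ S, g k) / (T * σ2)) +
        ((K : ℝ) - S.card) * L)
    (mstar : ℕ) (hm : mstar ≤ K)
    (hcond : ∀ j ∈ Finset.Icc 1 mstar,
      B * T * Real.logb 2 ((T * σ2 + E * ∑ i ∈ Finset.Icc 1 j, g i) /
        (T * σ2 + E * ∑ i ∈ Finset.Icc 1 (j - 1), g i)) ≥ L)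
    (hmax : ∀ m : ℕ, m ≤ K →
      (∀ j ∈ Finset.Icc 1 m,
        B * T * Real.logb 2 ((T * σ2 + E * ∑ i ∈ Finset.Icc 1 j, g i) /
          (T * σ2 + E * ∑ i ∈ Finset.Icc 1 (j - 1), g i)) ≥ L) → m ≤ mstar) :
    ∀ S ⊆ Finset.Icc 1 K, F S ≤ F (Finset.Icc 1 mstar) := by
  classical
  intro S hS
  set c : ℝ := T * σ2 with hc_def
  have hc : 0 < c := by positivity
  set s : ℕ → ℝ := fun m => ∑ i ∈ Finset.Icc 1 m, g i with hs_def
  have hs_app : ∀ m, s m = ∑ i ∈ Finset.Icc 1 m, g i := fun m => rfl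
  have hs_nonneg : ∀ m, m ≤ K → 0 ≤ s m := by
    intro m hmK
    apply Finset.sum_nonneg
    intro i hi
    exact hg i (Finset.Icc_subset_Icc_right hmK hi)
  have hpos : ∀ m, m ≤ K → 0 < c + E * s m := by
    intro m hmK
    have := hs_nonneg m hmK
    nlinarith
  have hstep : ∀ j, 1 ≤ j → s j = s (j - 1) + g j := by
    intro j hj
    obtain ⟨j', rfl⟩ : ∃ j', j = j' + 1 := ⟨j - 1, by omega⟩
    simp only [hs_app, Nat.add_sub_cancel]
    exact Finset.sum_Icc_succ_top (by omega) g
  have hs_mono : ∀ a b, a ≤ b → b ≤ K → s a ≤ s b := by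
    intro a b hab hbK
    apply Finset.sum_le_sum_of_subset_of_nonneg (Finset.Icc_subset_Icc_right hab)
    intro i hi _
    exact hg i (Finset.Icc_subset_Icc_right hbK hi)
  -- the per-step rate increment
  set D : ℕ → ℝ := fun j =>
    B * T * (Real.logb 2 (c + E * s j) - Real.logb 2 (c + E * s (j - 1))) with hD_def
  have hD_app : ∀ j, D j =
      B * T * (Real.logb 2 (c + E * s j) - Real.logb 2 (c + E * s (j - 1))) := fun j => rfl
  -- the activation condition expressed via D
  have hcondD : ∀ j, 1 ≤ j → j ≤ K →
      B * T * Real.logb 2 ((c + E * ∑ i ∈ Finset.Icc 1 j, g i) /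
        (c + E * ∑ i ∈ Finset.Icc 1 (j - 1), g i)) = D j := by
    intro j hj1 hjK
    rw [hD_app, hs_app, hs_app,
      Real.logb_div (ne_of_gt (hpos j hjK)) (ne_of_gt (hpos (j - 1) (by omega)))]
  have hD_cond : ∀ j, 1 ≤ j → j ≤ mstar → L ≤ D j := by
    intro j hj1 hjm
    have := hcond j (Finset.mem_Icc.mpr ⟨hj1, hjm⟩)
    rwa [hcondD j hj1 (le_trans hjm hm)] at this
  -- formula for F on prefixes
  have hFp : ∀ m, m ≤ K → F (Finset.Icc 1 m) =
      B * T * (Real.logb 2 (c + E * s m) - Real.logb 2 c) + ((K : ℝ) - m) * L := by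
    intro m hmK
    rw [hF]
    have h1 : 1 + E * s m / c = (c + E * s m) / c := by field_simp
    have h2 : ((Finset.Icc 1 m).card : ℝ) = m := by simp [Nat.card_Icc]
    rw [show (∑ k ∈ Finset.Icc 1 m, g k) = s m from rfl, h2, h1,
      Real.logb_div (ne_of_gt (hpos m hmK)) (ne_of_gt hc)]
  -- step relation for F on prefixes
  have stepF : ∀ j, 1 ≤ j → j ≤ K →
      F (Finset.Icc 1 j) = F (Finset.Icc 1 (j - 1)) + (D j - L) := by
    intro j hj1 hjK
    rw [hFp j hjK, hFp (j - 1) (by omega), hD_app]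
    have : ((j - 1 : ℕ) : ℝ) = (j : ℝ) - 1 := by
      push_cast [Nat.cast_sub hj1]; ring
    rw [this]; ring
  -- D is nonincreasing
  have Dmono : ∀ a b, 1 ≤ a → a ≤ b → b ≤ K → D b ≤ D a := by
    intro a b ha hab hbK
    have haK : a ≤ K := le_trans hab hbK
    have hpa := hpos a haK
    have hpa1 := hpos (a - 1) (by omega)
    have hpb := hpos b hbK
    have hpb1 := hpos (b - 1) (by omega)
    have hga : 0 ≤ g a := hg a (Finset.mem_Icc.mpr ⟨ha, haK⟩)
    have hgb : 0 ≤ g b := hg b (Finset.mem_Icc.mpr ⟨le_trans ha hab, hbK⟩)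
    have hgba : g b ≤ g a := hmono a b ha hab hbK
    have hsab : s (a - 1) ≤ s (b - 1) := hs_mono _ _ (by omega) (by omega)
    have hsa1 : 0 ≤ s (a - 1) := hs_nonneg _ (by omega)
    have hsa := hstep a ha
    have hsb := hstep b (le_trans ha hab)
    have hprod : g b * s (a - 1) ≤ g a * s (b - 1) := mul_le_mul hgba hsab hsa1 hga
    have hratio : (c + E * s b) / (c + E * s (b - 1)) ≤
        (c + E * s a) / (c + E * s (a - 1)) := by
      rw [div_le_div_iff₀ hpb1 hpa1]
      have expand : (c + E * s a) * (c + E * s (b - 1)) -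
          (c + E * s b) * (c + E * s (a - 1)) =
          c * E * (g a - g b) + E * E * (g a * s (b - 1) - g b * s (a - 1)) := by
        rw [hsa, hsb]; ring
      have h1 : 0 ≤ c * E * (g a - g b) :=
        mul_nonneg (mul_nonneg hc.le hE.le) (sub_nonneg.mpr hgba)
      have h2 : 0 ≤ E * E * (g a * s (b - 1) - g b * s (a - 1)) :=
        mul_nonneg (mul_nonneg hE.le hE.le) (sub_nonneg.mpr hprod)
      linarith
    have hlog := Real.logb_le_logb_of_le (one_lt_two) (div_pos hpb hpb1) hratio
    rw [Real.logb_div (ne_of_gt hpb) (ne_of_gt hpb1),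
      Real.logb_div (ne_of_gt hpa) (ne_of_gt hpa1)] at hlog
    rw [hD_app, hD_app]
    have hBT : (0 : ℝ) ≤ B * T := by positivity
    exact mul_le_mul_of_nonneg_left hlog hBT
  -- after mstar the increment is at most L
  have hDafter : ∀ j, mstar < j → j ≤ K → D j ≤ L := by
    intro j hjm hjK
    have hfail : D (mstar + 1) ≤ L := by
      by_contra hcon
      push_neg at hcon
      have h1 : mstar + 1 ≤ K := by omega
      have := hmax (mstar + 1) h1 ?_
      · omega
      · intro i hi
        rw [Finset.mem_Icc] at hi
        rw [hcondD i hi.1 (by omega)]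
        by_cases hi' : i ≤ mstar
        · exact hD_cond i hi.1 hi'
        · have : i = mstar + 1 := by omega
          rw [this]; exact le_of_lt hcon
    calc D j ≤ D (mstar + 1) := Dmono (mstar + 1) j (by omega) (by omega) hjK
      _ ≤ L := hfail
  -- F is nondecreasing along prefixes up to mstar
  have up : ∀ d, F (Finset.Icc 1 (mstar - d)) ≤ F (Finset.Icc 1 mstar) := by
    intro d
    induction d with
    | zero => simp
    | succ n ih =>
      by_cases h0 : mstar - n = 0
      · have : mstar - (n + 1) = mstar - n := by omega
        rw [this]; exact ih
      · have hj1 : 1 ≤ mstar - n := by omega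
        have e := stepF (mstar - n) hj1 (by omega)
        have hd := hD_cond (mstar - n) hj1 (by omega)
        have heq : mstar - (n + 1) = mstar - n - 1 := by omega
        rw [heq]
        linarith
  -- F is nonincreasing along prefixes after mstar
  have down : ∀ d, mstar + d ≤ K → F (Finset.Icc 1 (mstar + d)) ≤ F (Finset.Icc 1 mstar) := by
    intro d
    induction d with
    | zero => intro _; simp
    | succ n ih =>
      intro hK'
      have e := stepF (mstar + n + 1) (by omega) (by omega)
      have hd := hDafter (mstar + n + 1) (by omega) (by omega)
      have heq : mstar + n + 1 - 1 = mstar + n := by omega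
      rw [heq] at e
      have := ih (by omega)
      calc F (Finset.Icc 1 (mstar + (n + 1))) = F (Finset.Icc 1 (mstar + n)) +
            (D (mstar + n + 1) - L) := e
        _ ≤ F (Finset.Icc 1 mstar) := by linarith
  have hprefix : ∀ m, m ≤ K → F (Finset.Icc 1 m) ≤ F (Finset.Icc 1 mstar) := by
    intro m hmK
    rcases le_or_gt m mstar with h | h
    · have := up (mstar - m)
      rwa [show mstar - (mstar - m) = m by omega] at this
    · have := down (m - mstar) (by omega)
      rwa [show mstar + (m - mstar) = m by omega] at this
  -- now compare F S with F (Icc 1 S.card)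
  set m := S.card with hm_def
  have hmK : m ≤ K := by
    have := Finset.card_le_card hS
    simpa [Nat.card_Icc] using this
  have hS_nonneg : 0 ≤ ∑ k ∈ S, g k :=
    Finset.sum_nonneg fun k hk => hg k (hS hk)
  have hsumS : ∑ k ∈ S, g k ≤ s m := by
    set P := Finset.Icc 1 m with hP_def
    have hcardP : P.card = m := by simp [hP_def, Nat.card_Icc]
    have hcs : (S \ P).card = (P \ S).card := by
      have h1 := Finset.card_inter_add_card_sdiff S P
      have h2 := Finset.card_inter_add_card_sdiff P S
      rw [Finset.inter_comm] at h2
      omega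
    have key : ∑ k ∈ S \ P, g k ≤ ∑ k ∈ P \ S, g k := by
      by_cases hm0 : m = 0
      · have hSe : S = ∅ := Finset.card_eq_zero.mp (by omega)
        have hPe : P = ∅ := Finset.card_eq_zero.mp (by omega)
        simp [hSe, hPe]
      · have hm1 : 1 ≤ m := by omega
        have hA : ∀ x ∈ S \ P, g x ≤ g m := by
          intro x hx
          rw [Finset.mem_sdiff] at hx
          have hxK := hS hx.1
          rw [Finset.mem_Icc] at hxK
          have hxP : ¬(1 ≤ x ∧ x ≤ m) := by
            simpa [hP_def, Finset.mem_Icc] using hx.2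
          exact hmono m x hm1 (by omega) hxK.2
        have hBd : ∀ y ∈ P \ S, g m ≤ g y := by
          intro y hy
          rw [Finset.mem_sdiff, hP_def, Finset.mem_Icc] at hy
          exact hmono y m hy.1.1 hy.1.2 hmK
        calc ∑ k ∈ S \ P, g k ≤ (S \ P).card • g m :=
              Finset.sum_le_card_nsmul _ _ _ hA
          _ = (P \ S).card • g m := by rw [hcs]
          _ ≤ ∑ k ∈ P \ S, g k := Finset.card_nsmul_le_sum _ _ _ hBd
    have e1 := Finset.sum_inter_add_sum_sdiff S P g
    have e2 := Finset.sum_inter_add_sum_sdiff P S g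
    rw [Finset.inter_comm] at e2
    have hsm : s m = ∑ k ∈ P, g k := rfl
    linarith
  have hFSm : F S ≤ F (Finset.Icc 1 m) := by
    rw [hF S, hF (Finset.Icc 1 m)]
    have h2 : ((Finset.Icc 1 m).card : ℝ) = (S.card : ℝ) := by simp [Nat.card_Icc, hm_def]
    rw [h2]
    have hlt : (0 : ℝ) < 1 + E * (∑ k ∈ S, g k) / (T * σ2) := by
      have h0 : 0 ≤ E * (∑ k ∈ S, g k) / (T * σ2) :=
        div_nonneg (mul_nonneg hE.le hS_nonneg) (by positivity)
      linarith
    have hinner : 1 + E * (∑ k ∈ S, g k) / (T * σ2) ≤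
        1 + E * (∑ k ∈ Finset.Icc 1 m, g k) / (T * σ2) := by
      have hsm : (∑ k ∈ Finset.Icc 1 m, g k) = s m := rfl
      rw [hsm]
      have h1 : E * (∑ k ∈ S, g k) ≤ E * s m :=
        mul_le_mul_of_nonneg_left hsumS hE.le
      have h2 : E * (∑ k ∈ S, g k) / (T * σ2) ≤ E * s m / (T * σ2) :=
        (div_le_div_iff_of_pos_right (by positivity)).mpr h1
      linarith
    have hlog := Real.logb_le_logb_of_le (one_lt_two) hlt hinner
    have hBT : (0 : ℝ) ≤ B * T := by positivity
    have := mul_le_mul_of_nonneg_left hlog hBT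
    linarith
  exact le_trans hFSm (hprefix m hmK)
end
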